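/- Closed types of the same shape form a lattice under subtyping, with union as join and intersection as meet. -/
import Mathlib


/-- Operations are pairs (instance, operation symbol). -/
abbrev Operation := ℕ × ℕ
/-- A dirt is a finite set of operations. -/
abbrev Dirt := Finset Operation
/-- A region is a finite set of instances. -/
abbrev Region := Finset ℕ

/-- Closed core Eff types: ground types, function types `A → (B ! Δ)`,
effect types `E^R` and handler types `(A ! Δ₁) ⇒ (B ! Δ₂)`. -/
inductive Ty : Type where
  | bool : Ty
  | nat : Ty
  | unit : Ty
  | empty : Ty
  | fn : Ty → Ty → Dirt → Ty
  | eff : ℕ → Region → Ty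
  | hand : Ty → Dirt → Ty → Dirt → Ty
  deriving DecidableEq

/-- Dirty types `A ! Δ`. -/
abbrev DirtyTy := Ty × Dirt

/-- Structural subtyping on core Eff types. -/
inductive SubTy : Ty → Ty → Prop where
  | bool : SubTy .bool .bool
  | nat : SubTy .nat .nat
  | unit : SubTy .unit .unit
  | empty : SubTy .empty .empty
  | fn {A A' B B' : Ty} {Δ Δ' : Dirt} :
      SubTy A' A → SubTy B B' → Δ ⊆ Δ' → SubTy (.fn A B Δ) (.fn A' B' Δ')
  | eff {E : ℕ} {R R' : Region} : R ⊆ R' → SubTy (.eff E R) (.eff E R')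
  | hand {A A' B B' : Ty} {Δ₁ Δ₁' Δ₂ Δ₂' : Dirt} :
      SubTy A' A → Δ₁' ⊆ Δ₁ → SubTy B B' → Δ₂ ⊆ Δ₂' →
      SubTy (.hand A Δ₁ B Δ₂) (.hand A' Δ₁' B' Δ₂')

/-- Subtyping of dirty types: `A ! Δ ≤ A' ! Δ'` iff `A ≤ A'` and `Δ ⊆ Δ'`. -/
def SubD (C C' : DirtyTy) : Prop := SubTy C.1 C'.1 ∧ C.2 ⊆ C'.2

/-- Two types have the same shape iff they differ only in regions and dirts. -/
def SameShape : Ty → Ty → Prop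
  | .bool, .bool => True
  | .nat, .nat => True
  | .unit, .unit => True
  | .empty, .empty => True
  | .fn A B _, .fn A' B' _ => SameShape A A' ∧ SameShape B B'
  | .eff E _, .eff E' _ => E = E'
  | .hand A _ B _, .hand A' _ B' _ => SameShape A A' ∧ SameShape B B'
  | _, _ => False

mutual
/-- Union of two closed types of the same shape (junk on mismatched shapes). -/
def tyUnion : Ty → Ty → Ty
  | .fn A B Δ, .fn A' B' Δ' => .fn (tyInter A A') (tyUnion B B') (Δ ∪ Δ')
  | .eff E R, .eff _ R' => .eff E (R ∪ R')
  | .hand A Δ₁ B Δ₂, .hand A' Δ₁' B' Δ₂' =>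
      .hand (tyInter A A') (Δ₁ ∩ Δ₁') (tyUnion B B') (Δ₂ ∪ Δ₂')
  | A, _ => A
/-- Intersection of two closed types of the same shape (junk on mismatched shapes). -/
def tyInter : Ty → Ty → Ty
  | .fn A B Δ, .fn A' B' Δ' => .fn (tyUnion A A') (tyInter B B') (Δ ∩ Δ')
  | .eff E R, .eff _ R' => .eff E (R ∩ R')
  | .hand A Δ₁ B Δ₂, .hand A' Δ₁' B' Δ₂' =>
      .hand (tyUnion A A') (Δ₁ ∪ Δ₁') (tyInter B B') (Δ₂ ∩ Δ₂')
  | A, _ => A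
end

lemma subty_refl : ∀ A : Ty, SubTy A A := by
  intro A
  induction A with
  | bool => exact SubTy.bool
  | nat => exact SubTy.nat
  | unit => exact SubTy.unit
  | empty => exact SubTy.empty
  | fn A B Δ ihA ihB => exact .fn ihA ihB (le_refl _)
  | eff E R => exact .eff (le_refl _)
  | hand A Δ₁ B Δ₂ ihA ihB => exact .hand ihA (le_refl _) ihB (le_refl _)

lemma subty_trans : ∀ {B A C : Ty}, SubTy A B → SubTy B C → SubTy A C := by
  intro B
  induction B with
  | bool => intro A C h1 h2; cases h1; exact h2
  | nat => intro A C h1 h2; cases h1; exact h2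
  | unit => intro A C h1 h2; cases h1; exact h2
  | empty => intro A C h1 h2; cases h1; exact h2
  | fn A B Δ ihA ihB =>
    intro X Z h1 h2
    cases h1 with
    | fn hA hB hΔ =>
      cases h2 with
      | fn hA' hB' hΔ' => exact .fn (ihA hA' hA) (ihB hB hB') (hΔ.trans hΔ')
  | eff E R =>
    intro X Z h1 h2
    cases h1 with
    | eff hR => cases h2 with
      | eff hR' => exact .eff (hR.trans hR')
  | hand A Δ₁ B Δ₂ ihA ihB =>
    intro X Z h1 h2
    cases h1 with
    | hand hA h1' hB h2' =>
      cases h2 with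
      | hand hA' h1'' hB' h2'' =>
        exact .hand (ihA hA' hA) (h1''.trans h1') (ihB hB hB') (h2'.trans h2'')

lemma subty_antisymm : ∀ {A B : Ty}, SubTy A B → SubTy B A → A = B := by
  intro A B h1 h2
  induction h1 with
  | bool => rfl
  | nat => rfl
  | unit => rfl
  | empty => rfl
  | fn hA hB hΔ ihA ihB =>
    cases h2 with
    | fn hA' hB' hΔ' =>
      rw [← ihA hA', ihB hB', Finset.Subset.antisymm hΔ hΔ']
  | eff hR =>
    cases h2 with
    | eff hR' => rw [Finset.Subset.antisymm hR hR']
  | hand hA h1 hB h2' ihA ihB =>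
    cases h2 with
    | hand hA' h1' hB' h2'' =>
      rw [← ihA hA', ihB hB', Finset.Subset.antisymm h1' h1,
          Finset.Subset.antisymm h2' h2'']

lemma sameShape_symm : ∀ {A B : Ty}, SameShape A B → SameShape B A := by
  intro A
  induction A with
  | fn A B Δ ihA ihB =>
    intro C h
    cases C <;> simp only [SameShape] at h ⊢ <;> try exact h
    exact ⟨ihA h.1, ihB h.2⟩
  | eff E R =>
    intro C h
    cases C <;> simp only [SameShape] at h ⊢ <;> try exact h
    exact h.symm
  | hand A Δ₁ B Δ₂ ihA ihB =>
    intro C h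
    cases C <;> simp only [SameShape] at h ⊢ <;> try exact h
    exact ⟨ihA h.1, ihB h.2⟩
  | _ =>
    intro C h
    cases C <;> simp only [SameShape] at h ⊢ <;> try exact h

lemma sameShape_trans : ∀ {A B C : Ty}, SameShape A B → SameShape B C → SameShape A C := by
  intro A
  induction A with
  | fn A B Δ ihA ihB =>
    intro X Y h1 h2
    cases X <;> simp only [SameShape] at h1 <;> try exact h1.elim
    cases Y <;> simp only [SameShape] at h2 ⊢ <;> try exact h2.elim
    exact ⟨ihA h1.1 h2.1, ihB h1.2 h2.2⟩
  | eff E R =>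
    intro X Y h1 h2
    cases X <;> simp only [SameShape] at h1 <;> try exact h1.elim
    cases Y <;> simp only [SameShape] at h2 ⊢ <;> try exact h2.elim
    exact h1.trans h2
  | hand A Δ₁ B Δ₂ ihA ihB =>
    intro X Y h1 h2
    cases X <;> simp only [SameShape] at h1 <;> try exact h1.elim
    cases Y <;> simp only [SameShape] at h2 ⊢ <;> try exact h2.elim
    exact ⟨ihA h1.1 h2.1, ihB h1.2 h2.2⟩
  | _ =>
    intro X Y h1 h2
    cases X <;> simp only [SameShape] at h1 <;> try exact h1.elim
    cases Y <;> simp only [SameShape] at h2 ⊢ <;> try exact h2.elim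

lemma union_inter_shape : ∀ {A B : Ty}, SameShape A B →
    SameShape (tyUnion A B) A ∧ SameShape (tyInter A B) A := by
  intro A
  induction A with
  | fn A B Δ ihA ihB =>
    intro X h
    cases X <;> simp only [SameShape] at h <;> try exact h.elim
    exact ⟨⟨(ihA h.1).2, (ihB h.2).1⟩, ⟨(ihA h.1).1, (ihB h.2).2⟩⟩
  | eff E R =>
    intro X h
    cases X <;> simp only [SameShape] at h <;> try exact h.elim
    exact ⟨rfl, rfl⟩
  | hand A Δ₁ B Δ₂ ihA ihB =>
    intro X h
    cases X <;> simp only [SameShape] at h <;> try exact h.elim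
    exact ⟨⟨(ihA h.1).2, (ihB h.2).1⟩, ⟨(ihA h.1).1, (ihB h.2).2⟩⟩
  | _ =>
    intro X h
    cases X <;> simp only [SameShape] at h <;> first | exact h.elim | exact ⟨trivial, trivial⟩

lemma union_inter_bounds : ∀ {A B : Ty}, SameShape A B →
    SubTy A (tyUnion A B) ∧ SubTy B (tyUnion A B) ∧
    SubTy (tyInter A B) A ∧ SubTy (tyInter A B) B := by
  intro A
  induction A with
  | bool =>
    intro B h
    cases B <;> simp only [SameShape] at h <;> try exact h.elim
    exact ⟨.bool, .bool, .bool, .bool⟩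
  | nat =>
    intro B h
    cases B <;> simp only [SameShape] at h <;> try exact h.elim
    exact ⟨.nat, .nat, .nat, .nat⟩
  | unit =>
    intro B h
    cases B <;> simp only [SameShape] at h <;> try exact h.elim
    exact ⟨.unit, .unit, .unit, .unit⟩
  | empty =>
    intro B h
    cases B <;> simp only [SameShape] at h <;> try exact h.elim
    exact ⟨.empty, .empty, .empty, .empty⟩
  | fn A B Δ ihA ihB =>
    intro X h
    cases X <;> simp only [SameShape] at h <;> try exact h.elim
    obtain ⟨uA1, uA2, iA1, iA2⟩ := ihA h.1
    obtain ⟨uB1, uB2, iB1, iB2⟩ := ihB h.2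
    exact ⟨.fn iA1 uB1 Finset.subset_union_left,
           .fn iA2 uB2 Finset.subset_union_right,
           .fn uA1 iB1 Finset.inter_subset_left,
           .fn uA2 iB2 Finset.inter_subset_right⟩
  | eff E R =>
    intro X h
    cases X <;> simp only [SameShape] at h <;> try exact h.elim
    cases h
    exact ⟨.eff Finset.subset_union_left, .eff Finset.subset_union_right,
           .eff Finset.inter_subset_left, .eff Finset.inter_subset_right⟩
  | hand A Δ₁ B Δ₂ ihA ihB =>
    intro X h
    cases X <;> simp only [SameShape] at h <;> try exact h.elim
    obtain ⟨uA1, uA2, iA1, iA2⟩ := ihA h.1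
    obtain ⟨uB1, uB2, iB1, iB2⟩ := ihB h.2
    exact ⟨.hand iA1 Finset.inter_subset_left uB1 Finset.subset_union_left,
           .hand iA2 Finset.inter_subset_right uB2 Finset.subset_union_right,
           .hand uA1 Finset.subset_union_left iB1 Finset.inter_subset_left,
           .hand uA2 Finset.subset_union_right iB2 Finset.inter_subset_right⟩

lemma union_inter_lub : ∀ (A B C : Ty),
    (SubTy A C → SubTy B C → SubTy (tyUnion A B) C) ∧
    (SubTy C A → SubTy C B → SubTy C (tyInter A B)) := by
  intro A
  induction A with
  | bool =>
    intro B C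
    refine ⟨fun h1 _ => ?_, fun h1 h2 => ?_⟩
    · cases h1; cases B <;> exact SubTy.bool
    · cases h1; cases h2; exact SubTy.bool
  | nat =>
    intro B C
    refine ⟨fun h1 _ => ?_, fun h1 h2 => ?_⟩
    · cases h1; cases B <;> exact SubTy.nat
    · cases h1; cases h2; exact SubTy.nat
  | unit =>
    intro B C
    refine ⟨fun h1 _ => ?_, fun h1 h2 => ?_⟩
    · cases h1; cases B <;> exact SubTy.unit
    · cases h1; cases h2; exact SubTy.unit
  | empty =>
    intro B C
    refine ⟨fun h1 _ => ?_, fun h1 h2 => ?_⟩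
    · cases h1; cases B <;> exact SubTy.empty
    · cases h1; cases h2; exact SubTy.empty
  | fn A B Δ ihA ihB =>
    intro X C
    refine ⟨fun h1 h2 => ?_, fun h1 h2 => ?_⟩
    · cases h1 with
      | fn hA hB hΔ =>
        cases h2 with
        | fn hA' hB' hΔ' =>
          exact .fn ((ihA _ _).2 hA hA') ((ihB _ _).1 hB hB')
            (Finset.union_subset hΔ hΔ')
    · cases h1 with
      | fn hA hB hΔ =>
        cases h2 with
        | fn hA' hB' hΔ' =>
          exact .fn ((ihA _ _).1 hA hA') ((ihB _ _).2 hB hB')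
            (Finset.subset_inter hΔ hΔ')
  | eff E R =>
    intro X C
    refine ⟨fun h1 h2 => ?_, fun h1 h2 => ?_⟩
    · cases h1 with
      | eff hR =>
        cases h2 with
        | eff hR' => exact .eff (Finset.union_subset hR hR')
    · cases h1 with
      | eff hR =>
        cases h2 with
        | eff hR' => exact .eff (Finset.subset_inter hR hR')
  | hand A Δ₁ B Δ₂ ihA ihB =>
    intro X C
    refine ⟨fun h1 h2 => ?_, fun h1 h2 => ?_⟩
    · cases h1 with
      | hand hA hΔ₁ hB hΔ₂ =>
        cases h2 with
        | hand hA' hΔ₁' hB' hΔ₂' =>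
          exact .hand ((ihA _ _).2 hA hA') (Finset.subset_inter hΔ₁ hΔ₁')
            ((ihB _ _).1 hB hB') (Finset.union_subset hΔ₂ hΔ₂')
    · cases h1 with
      | hand hA hΔ₁ hB hΔ₂ =>
        cases h2 with
        | hand hA' hΔ₁' hB' hΔ₂' =>
          exact .hand ((ihA _ _).1 hA hA') (Finset.union_subset hΔ₁ hΔ₁')
            ((ihB _ _).2 hB hB') (Finset.subset_inter hΔ₂ hΔ₂')

/-- Closed types of a fixed shape form a lattice under subtyping,
with union as join and intersection as meet. -/
theorem sameShape_lattice (A₀ : Ty) :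
    ∃ L : Lattice {A : Ty // SameShape A A₀},
      ∀ x y : {A : Ty // SameShape A A₀},
        (L.toSemilatticeSup.le x y ↔ SubTy x.1 y.1) ∧
        (L.toSemilatticeSup.sup x y).1 = tyUnion x.1 y.1 ∧
        ((@Lattice.toSemilatticeInf _ L).inf x y).1 = tyInter x.1 y.1 := by
  have shape : ∀ x y : {A : Ty // SameShape A A₀}, SameShape x.1 y.1 := fun x y =>
    sameShape_trans x.2 (sameShape_symm y.2)
  refine ⟨{
    le := fun x y => SubTy x.1 y.1
    le_refl := fun x => subty_refl x.1
    le_trans := fun _ _ _ h1 h2 => subty_trans h1 h2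
    le_antisymm := fun _ _ h1 h2 => Subtype.ext (subty_antisymm h1 h2)
    sup := fun x y => ⟨tyUnion x.1 y.1,
      sameShape_trans (union_inter_shape (shape x y)).1 x.2⟩
    le_sup_left := fun x y => (union_inter_bounds (shape x y)).1
    le_sup_right := fun x y => (union_inter_bounds (shape x y)).2.1
    sup_le := fun x y z h1 h2 => (union_inter_lub x.1 y.1 z.1).1 h1 h2
    inf := fun x y => ⟨tyInter x.1 y.1,
      sameShape_trans (union_inter_shape (shape x y)).2 x.2⟩
    inf_le_left := fun x y => (union_inter_bounds (shape x y)).2.2.1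
    inf_le_right := fun x y => (union_inter_bounds (shape x y)).2.2.2
    le_inf := fun x y z h1 h2 => (union_inter_lub y.1 z.1 x.1).2 h1 h2
  }, fun x y => ⟨Iff.rfl, rfl, rfl⟩⟩
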